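/- Lower bound on the meeting probability of coupled ISIR: suppose two coupled ISIR chains share K-1 fresh proposals z*₂,…,z*_K i.i.d. from q(·|x), with bounded weights w ≤ w_max and E_q[w] = p(x), and the indicators are drawn from the maximal coupling of the two categorical weight distributions (which differ in at most one entry). Then the probability that the chains meet in one step is at least p(x)/w_max - p(x)/(K·w_max), which is increasing in K. -/

import Mathlib

open MeasureTheory

lemma map_eval_pi' {α : Type*} [MeasurableSpace α] (μ : Measure α) [IsProbabilityMeasure μ]
    {K : ℕ} (k : Fin K) :
    (Measure.pi fun _ : Fin K => μ).map (fun y => y k) = μ := by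
  ext s hs
  rw [Measure.map_apply (measurable_pi_apply k) hs]
  have : (fun y : Fin K → α => y k) ⁻¹' s
      = Set.pi Set.univ (Function.update (fun _ : Fin K => Set.univ) k s) := by
    ext y
    simp [Set.mem_pi, Function.update]
  rw [this, Measure.pi_pi]
  rw [Fintype.prod_eq_single k]
  · simp
  · intro j hj; simp [Function.update_of_ne hj]

/-- Lower bound on the one-step meeting probability of coupled ISIR: with `K - 1` shared
fresh proposals, bounded weights `w ≤ w_max` with `E_q[w] = p(x)`, and retained-sample
weights `a, b ∈ (0, w_max]` in slot `0`, the meeting probability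
`E[∑_{k≠0} min(w̃_k, ṽ_k)]` is at least `p(x)/w_max - p(x)/(K w_max)`, a bound that is
increasing in `K`. -/
theorem coupled_isir_meeting_prob_lower_bound {α : Type*} [MeasurableSpace α]
    (μ : Measure α) [IsProbabilityMeasure μ]
    (K : ℕ) (hK : 2 ≤ K) (w : α → ℝ) (hwm : Measurable w)
    (wmax px : ℝ) (hwpos : ∀ y, 0 < w y) (hwb : ∀ y, w y ≤ wmax)
    (hpx : ∫ y, w y ∂μ = px) (hpx0 : 0 < px)
    (a b : ℝ) (ha0 : 0 < a) (ha : a ≤ wmax) (hb0 : 0 < b) (hb : b ≤ wmax) :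
    (px / wmax - px / ((K : ℝ) * wmax) ≤
      ∫ y : Fin K → α,
        ∑ k ∈ Finset.univ \ {(⟨0, by omega⟩ : Fin K)},
          min (w (y k) / (a + ∑ j ∈ Finset.univ \ {(⟨0, by omega⟩ : Fin K)}, w (y j)))
              (w (y k) / (b + ∑ j ∈ Finset.univ \ {(⟨0, by omega⟩ : Fin K)}, w (y j)))
        ∂(Measure.pi fun _ => μ)) ∧
    (∀ K1 K2 : ℕ, 2 ≤ K1 → K1 ≤ K2 →
      px / wmax - px / ((K1 : ℝ) * wmax) ≤ px / wmax - px / ((K2 : ℝ) * wmax)) := by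
  have hwmax : 0 < wmax := lt_of_lt_of_le ha0 ha
  constructor
  · set s : Finset (Fin K) := Finset.univ \ {(⟨0, by omega⟩ : Fin K)} with hs
    set π : Measure (Fin K → α) := Measure.pi fun _ : Fin K => μ with hπ
    have hcard : (s.card : ℝ) = (K : ℝ) - 1 := by
      have : s.card = K - 1 := by
        rw [hs, Finset.card_sdiff_of_subset (by simp)]
        simp
      rw [this, Nat.cast_sub (by omega)]
      simp
    -- sum bounds
    have hS0 : ∀ y : Fin K → α, 0 ≤ ∑ j ∈ s, w (y j) :=
      fun y => Finset.sum_nonneg fun j _ => (hwpos (y j)).le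
    have hSb : ∀ y : Fin K → α, ∑ j ∈ s, w (y j) ≤ ((K : ℝ) - 1) * wmax := by
      intro y
      calc ∑ j ∈ s, w (y j) ≤ ∑ _j ∈ s, wmax :=
            Finset.sum_le_sum fun j _ => hwb (y j)
        _ = (s.card : ℝ) * wmax := by rw [Finset.sum_const, nsmul_eq_mul]
        _ = ((K : ℝ) - 1) * wmax := by rw [hcard]
    have hKpos : (0 : ℝ) < K := by positivity
    have hKw : (0 : ℝ) < (K : ℝ) * wmax := by positivity
    -- pointwise lower bound
    have hpt : ∀ y : Fin K → α,
        (∑ j ∈ s, w (y j)) / ((K : ℝ) * wmax) ≤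
        ∑ k ∈ s, min (w (y k) / (a + ∑ j ∈ s, w (y j)))
            (w (y k) / (b + ∑ j ∈ s, w (y j))) := by
      intro y
      rw [Finset.sum_div]
      refine Finset.sum_le_sum fun k _ => le_min ?_ ?_
      · apply div_le_div_of_nonneg_left (hwpos (y k)).le (by have := hS0 y; linarith)
        have := hSb y
        nlinarith
      · apply div_le_div_of_nonneg_left (hwpos (y k)).le (by have := hS0 y; linarith)
        have := hSb y
        nlinarith
    -- measurability
    have hSmeas : Measurable fun y : Fin K → α => ∑ j ∈ s, w (y j) :=
      Finset.measurable_sum s fun j _ => hwm.comp (measurable_pi_apply j)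
    have hfmeas : Measurable fun y : Fin K → α =>
        ∑ k ∈ s, min (w (y k) / (a + ∑ j ∈ s, w (y j)))
            (w (y k) / (b + ∑ j ∈ s, w (y j))) := by
      refine Finset.measurable_sum s fun k _ => Measurable.min ?_ ?_
      · exact ((hwm.comp (measurable_pi_apply k)).div (measurable_const.add hSmeas))
      · exact ((hwm.comp (measurable_pi_apply k)).div (measurable_const.add hSmeas))
    -- integrability
    have hgint : Integrable (fun y : Fin K → α => (∑ j ∈ s, w (y j)) / ((K : ℝ) * wmax)) π := by
      refine (integrable_const (((K : ℝ) - 1) * wmax / ((K : ℝ) * wmax))).mono'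
        (hSmeas.div_const _).aestronglyMeasurable ?_
      filter_upwards with y
      rw [Real.norm_eq_abs, abs_of_nonneg (div_nonneg (hS0 y) hKw.le)]
      exact div_le_div_of_nonneg_right (hSb y) hKw.le
    have hfint : Integrable (fun y : Fin K → α =>
        ∑ k ∈ s, min (w (y k) / (a + ∑ j ∈ s, w (y j)))
            (w (y k) / (b + ∑ j ∈ s, w (y j)))) π := by
      refine (integrable_const ((K : ℝ))).mono' hfmeas.aestronglyMeasurable ?_
      filter_upwards with y
      have h1 : ∀ k ∈ s, min (w (y k) / (a + ∑ j ∈ s, w (y j)))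
          (w (y k) / (b + ∑ j ∈ s, w (y j))) ≤ 1 := by
        intro k hk
        refine min_le_of_left_le (div_le_one_of_le₀ ?_ (by have := hS0 y; linarith))
        have : w (y k) ≤ ∑ j ∈ s, w (y j) :=
          Finset.single_le_sum (fun j _ => (hwpos (y j)).le) hk
        linarith
      have h0 : 0 ≤ ∑ k ∈ s, min (w (y k) / (a + ∑ j ∈ s, w (y j)))
          (w (y k) / (b + ∑ j ∈ s, w (y j))) := by
        refine Finset.sum_nonneg fun k _ => le_min
          (div_nonneg (hwpos (y k)).le (by have := hS0 y; linarith))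
          (div_nonneg (hwpos (y k)).le (by have := hS0 y; linarith))
      rw [Real.norm_eq_abs, abs_of_nonneg h0]
      calc ∑ k ∈ s, min (w (y k) / (a + ∑ j ∈ s, w (y j)))
              (w (y k) / (b + ∑ j ∈ s, w (y j)))
          ≤ ∑ _k ∈ s, (1 : ℝ) := Finset.sum_le_sum h1
        _ = (s.card : ℝ) := by simp
        _ ≤ (K : ℝ) := by rw [hcard]; linarith
    -- value of the lower integral
    have hwjint : ∀ j : Fin K, Integrable (fun y : Fin K → α => w (y j)) π := by
      intro j
      refine (integrable_const wmax).mono'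
        ((hwm.comp (measurable_pi_apply j)).aestronglyMeasurable) ?_
      filter_upwards with y
      rw [Real.norm_eq_abs, abs_of_nonneg (hwpos (y j)).le]
      exact hwb (y j)
    have hkey : ∀ j : Fin K, ∫ y : Fin K → α, w (y j) ∂π = px := by
      intro j
      have h1 : ∫ y : Fin K → α, w (y j) ∂π = ∫ x, w x ∂(π.map fun y => y j) :=
        (integral_map (measurable_pi_apply j).aemeasurable hwm.aestronglyMeasurable).symm
      rw [h1, hπ, map_eval_pi' μ j, hpx]
    have hgval : ∫ y : Fin K → α, (∑ j ∈ s, w (y j)) / ((K : ℝ) * wmax) ∂π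
        = ((K : ℝ) - 1) * px / ((K : ℝ) * wmax) := by
      rw [integral_div, integral_finset_sum s fun j _ => hwjint j]
      simp_rw [hkey]
      rw [Finset.sum_const, nsmul_eq_mul, hcard]
    have heq : px / wmax - px / ((K : ℝ) * wmax) = ((K : ℝ) - 1) * px / ((K : ℝ) * wmax) := by
      field_simp
    calc px / wmax - px / ((K : ℝ) * wmax)
        = ∫ y : Fin K → α, (∑ j ∈ s, w (y j)) / ((K : ℝ) * wmax) ∂π := by
          rw [hgval, heq]
      _ ≤ _ := integral_mono hgint hfint hpt
  · intro K1 K2 hK1 hK12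
    have h1 : (0 : ℝ) < (K1 : ℝ) * wmax := by
      have : (0:ℝ) < K1 := by positivity
      positivity
    apply sub_le_sub_left
    apply div_le_div_of_nonneg_left hpx0.le h1
    have : (K1 : ℝ) ≤ (K2 : ℝ) := by exact_mod_cast hK12
    nlinarith
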